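/- (Algorithmic foundation of probability theory.) ν-almost every x : ℕ → Bool is Martin-Löf–Solovay–Chaitin random. -/

import Mathlib

open MeasureTheory Filter

/-- `u` is a proper prefix of `v`. -/
def ProperPrefix (u v : List Bool) : Prop :=
  ∃ w : List Bool, w ≠ [] ∧ v = u ++ w

/-- A set of strings is prefix-free if no element is a proper prefix of another element. -/
def PrefixFreeSet (S : Set (List Bool)) : Prop :=
  ∀ u ∈ S, ∀ v ∈ S, ¬ ProperPrefix u v

/-- A Chaitin computer: a partial recursive function on binary strings whose
halting set (domain) is prefix-free. -/
structure ChaitinComputer where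
  f : List Bool →. List Bool
  partrec : Partrec f
  prefixFree : PrefixFreeSet {w : List Bool | (f w).Dom}

/-- A Chaitin computer `U` is universal if for every Chaitin computer `C` there is a
constant `c` such that every `w` in the domain of `C` is simulated: there is `y` with
`U y = C w` and `y.length ≤ w.length + c`. -/
def ChaitinComputer.Universal (U : ChaitinComputer) : Prop :=
  ∀ C : ChaitinComputer, ∃ c : ℕ, ∀ w : List Bool, (C.f w).Dom →
    ∃ y : List Bool, U.f y = C.f w ∧ y.length ≤ w.length + c

/-- The algorithmic information of a string `w` with respect to a universal Chaitin
computer `U`: the least length of a program `y` with `U y = w`, and `∞` if there is none. -/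
noncomputable def info (U : ChaitinComputer) (w : List Bool) : ℕ∞ :=
  ⨅ (y : List Bool) (_ : U.f y = Part.some w), (y.length : ℕ∞)

/-- The prefix of length `n` of a sequence `x : ℕ → Bool`, as a binary string. -/
def prefixOf (x : ℕ → Bool) (n : ℕ) : List Bool :=
  (List.range n).map x

/-- A sequence is Martin-Löf–Solovay–Chaitin random if for every universal Chaitin
computer `U` there is a constant `c > 0` with `I_U(x↾n) ≥ n − c` for all `n ≥ 1`. -/
def MLSCRandom (x : ℕ → Bool) : Prop :=
  ∀ U : ChaitinComputer, U.Universal →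
    ∃ c : ℕ, 0 < c ∧ ∀ n : ℕ, 1 ≤ n →
      (n : ℕ∞) ≤ info U (prefixOf x n) + (c : ℕ∞)

lemma info_lt_iff {U : ChaitinComputer} {w : List Bool} {t : ℕ∞} :
    info U w < t ↔ ∃ y, U.f y = Part.some w ∧ (y.length : ℕ∞) < t := by
  simp [info, iInf_lt_iff]

lemma info_le {U : ChaitinComputer} {w y : List Bool} (h : U.f y = Part.some w) :
    info U w ≤ (y.length : ℕ∞) :=
  iInf₂_le y h

lemma prefixOf_length (x : ℕ → Bool) (n : ℕ) : (prefixOf x n).length = n := by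
  simp [prefixOf]

def cyl (w : List Bool) : Set (ℕ → Bool) := {x | prefixOf x w.length = w}

lemma cyl_eq (w : List Bool) :
    cyl w = {x : ℕ → Bool | ∀ i : Fin w.length, x i = w.get i} := by
  ext x
  simp only [cyl, Set.mem_setOf_eq, List.ext_get_iff, prefixOf_length, true_and]
  constructor
  · rintro h ⟨i, hi⟩
    have := h i (by simpa [prefixOf_length] using hi) hi
    simpa [prefixOf] using this
  · intro h n h1 h2
    simpa [prefixOf] using h ⟨n, h2⟩

lemma measurableSet_cyl (w : List Bool) : MeasurableSet (cyl w) := by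
  rw [cyl_eq]
  have : {x : ℕ → Bool | ∀ i : Fin w.length, x i = w.get i}
      = ⋂ i : Fin w.length, (fun x : ℕ → Bool => x i) ⁻¹' {w.get i} := by
    ext; simp
  rw [this]
  exact MeasurableSet.iInter fun i => (measurable_pi_apply _) (MeasurableSet.singleton _)

lemma mem_cyl_prefixOf (x : ℕ → Bool) (n : ℕ) : x ∈ cyl (prefixOf x n) := by
  simp [cyl, prefixOf_length]

lemma prefixOf_prefix (x : ℕ → Bool) {m n : ℕ} (h : m ≤ n) :
    prefixOf x m <+: prefixOf x n := by
  obtain ⟨k, rfl⟩ := Nat.exists_eq_add_of_le h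
  refine ⟨(List.map (fun i => m + i) (List.range k)).map x, ?_⟩
  simp [prefixOf, List.range_add]

lemma cyl_disjoint {u v : List Bool} (huv : u ≠ v)
    (h1 : ¬ ProperPrefix u v) (h2 : ¬ ProperPrefix v u) :
    Disjoint (cyl u) (cyl v) := by
  rw [Set.disjoint_left]
  intro x hu hv
  rcases le_total u.length v.length with h | h
  · have := (prefixOf_prefix x h)
    rw [hu, hv] at this
    obtain ⟨w, hw⟩ := this
    exact h1 ⟨w, fun hw0 => huv (by simp [← hw, hw0]), hw.symm⟩
  · have := (prefixOf_prefix x h)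
    rw [hu, hv] at this
    obtain ⟨w, hw⟩ := this
    exact h2 ⟨w, fun hw0 => huv (by simp [← hw, hw0]), hw.symm⟩

/-- **Algorithmic foundation of probability theory.**
If `ν` is the product probability measure on `ℕ → Bool` under which the coordinates are
independent fair coin tosses (characterized by its cylinder probabilities), then
`ν`-almost every sequence is Martin-Löf–Solovay–Chaitin random. -/
theorem ae_mlsc_random
    (ν : Measure (ℕ → Bool)) [IsProbabilityMeasure ν]
    (hν : ∀ (n : ℕ) (b : Fin n → Bool),
      ν {x : ℕ → Bool | ∀ i : Fin n, x i = b i} = (1 / 2 : ENNReal) ^ n) :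
    ∀ᵐ x ∂ν, MLSCRandom x := by
  have hcyl : ∀ w : List Bool, ν (cyl w) = (1 / 2 : ENNReal) ^ w.length := by
    intro w
    rw [cyl_eq]
    exact hν w.length w.get
  by_cases hex : ∃ U : ChaitinComputer, U.Universal
  swap
  · filter_upwards with x U hU
    exact absurd ⟨U, hU⟩ hex
  obtain ⟨U₀, hU₀⟩ := hex
  -- index sets of "short programs with long outputs"
  set P : ℕ → Set (List Bool × List Bool) := fun c =>
    {p | U₀.f p.1 = Part.some p.2 ∧ p.1.length + c < p.2.length} with hP
  set Bad : ℕ → Set (ℕ → Bool) := fun c => ⋃ p : P c, cyl p.1.2 with hBad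
  -- injectivity of first component on P c
  have hfst : ∀ c, ∀ p q : P c, p.1.1 = q.1.1 → p = q := by
    rintro c ⟨⟨p1, p2⟩, hp⟩ ⟨⟨q1, q2⟩, hq⟩ h
    simp only at h
    subst h
    have : p2 = q2 := by
      have := hp.1.symm.trans hq.1
      exact Part.some_inj.mp this
    simp [this]
  -- Kraft inequality
  have kraft : ∀ c : ℕ, (∑' p : P c, (1 / 2 : ENNReal) ^ (p : List Bool × List Bool).1.length) ≤ 1 := by
    intro c
    have hdis : Pairwise (Function.onFun Disjoint fun p : P c => cyl p.1.1) := by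
      intro p q hpq
      have hne : (p : List Bool × List Bool).1 ≠ (q : List Bool × List Bool).1 :=
        fun h => hpq (hfst c p q h)
      have hpd : (U₀.f p.1.1).Dom := by rw [p.2.1]; trivial
      have hqd : (U₀.f q.1.1).Dom := by rw [q.2.1]; trivial
      exact cyl_disjoint hne (U₀.prefixFree _ hpd _ hqd) (U₀.prefixFree _ hqd _ hpd)
    calc (∑' p : P c, (1 / 2 : ENNReal) ^ (p : List Bool × List Bool).1.length)
        = ∑' p : P c, ν (cyl (p : List Bool × List Bool).1) := by
          congr 1; ext p; rw [hcyl]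
      _ = ν (⋃ p : P c, cyl (p : List Bool × List Bool).1) :=
          (measure_iUnion hdis fun p => measurableSet_cyl _).symm
      _ ≤ 1 := prob_le_one
  -- measure of Bad c
  have hBadMeas : ∀ c : ℕ, ν (Bad c) ≤ (1 / 2 : ENNReal) ^ (c + 1) := by
    intro c
    calc ν (Bad c) ≤ ∑' p : P c, ν (cyl (p : List Bool × List Bool).2) :=
          measure_iUnion_le _
      _ = ∑' p : P c, (1 / 2 : ENNReal) ^ (p : List Bool × List Bool).2.length := by
          congr 1; ext p; rw [hcyl]
      _ ≤ ∑' p : P c, (1 / 2 : ENNReal) ^ (c + 1) * (1 / 2 : ENNReal) ^ (p : List Bool × List Bool).1.length := by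
          apply ENNReal.tsum_le_tsum
          intro p
          rw [← pow_add]
          apply pow_le_pow_of_le_one zero_le (by norm_num)
          have := p.2.2
          omega
      _ = (1 / 2 : ENNReal) ^ (c + 1) * ∑' p : P c, (1 / 2 : ENNReal) ^ (p : List Bool × List Bool).1.length :=
          ENNReal.tsum_mul_left
      _ ≤ (1 / 2 : ENNReal) ^ (c + 1) * 1 := by
          exact mul_le_mul_right (kraft c) _
      _ = (1 / 2 : ENNReal) ^ (c + 1) := mul_one _
  -- the null set
  have hnull : ν (⋂ c : ℕ, Bad c) = 0 := by
    by_contra h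
    obtain ⟨c, hc⟩ := ENNReal.exists_inv_two_pow_lt h
    have h1 : ν (⋂ c : ℕ, Bad c) ≤ (1 / 2 : ENNReal) ^ (c + 1) :=
      le_trans (measure_mono (Set.iInter_subset _ c)) (hBadMeas c)
    have h2 : ((1 : ENNReal) / 2) ^ (c + 1) ≤ 2⁻¹ ^ c := by
      rw [one_div]
      exact pow_le_pow_of_le_one zero_le (by norm_num) (Nat.le_succ c)
    exact absurd hc (not_lt.mpr (h1.trans h2))
  -- conclude
  rw [ae_iff]
  apply measure_mono_null _ hnull
  intro x hx
  simp only [Set.mem_setOf_eq] at hx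
  by_contra hxB
  apply hx
  -- x ∉ ⋂ Bad → ∃ c, x ∉ Bad c
  obtain ⟨c, hc⟩ : ∃ c, x ∉ Bad c := by
    by_contra h
    push_neg at h
    exact hxB (Set.mem_iInter.mpr h)
  -- key bound for U₀
  have key : ∀ n : ℕ, (n : ℕ∞) ≤ info U₀ (prefixOf x n) + (c : ℕ∞) := by
    intro n
    by_contra h
    push_neg at h
    have hfin : info U₀ (prefixOf x n) ≠ ⊤ := by
      intro ht
      rw [ht] at h
      simp at h
    lift info U₀ (prefixOf x n) to ℕ using hfin with m hm
    have hmn : m + c < n := by exact_mod_cast h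
    have hlt : info U₀ (prefixOf x n) < ((n - c : ℕ) : ℕ∞) := by
      rw [← hm]
      exact_mod_cast (by omega : m < n - c)
    obtain ⟨y, hy, hylen⟩ := info_lt_iff.mp hlt
    have hylen' : y.length + c < n := by
      have : y.length < n - c := by exact_mod_cast hylen
      omega
    apply hc
    refine Set.mem_iUnion.mpr ⟨⟨(y, prefixOf x n), ?_⟩, ?_⟩
    · exact ⟨hy, by rw [prefixOf_length]; exact hylen'⟩
    · exact mem_cyl_prefixOf x n
  -- now arbitrary universal U
  intro U hU
  obtain ⟨d, hd⟩ := hU₀ U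
  refine ⟨c + d + 1, by omega, fun n _ => ?_⟩
  have hcomp : info U₀ (prefixOf x n) ≤ info U (prefixOf x n) + (d : ℕ∞) := by
    by_cases hfin : info U (prefixOf x n) = ⊤
    · rw [hfin]; simp
    lift info U (prefixOf x n) to ℕ using hfin with m hm
    have : info U (prefixOf x n) < ((m + 1 : ℕ) : ℕ∞) := by
      rw [← hm]; exact_mod_cast Nat.lt_succ_self m
    obtain ⟨z, hz, hzlen⟩ := info_lt_iff.mp this
    have hzlen' : z.length ≤ m := by
      have : z.length < m + 1 := by exact_mod_cast hzlen
      omega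
    have hzd : (U.f z).Dom := by rw [hz]; trivial
    obtain ⟨y, hy1, hy2⟩ := hd z hzd
    have : info U₀ (prefixOf x n) ≤ (y.length : ℕ∞) := info_le (hy1.trans hz)
    refine this.trans ?_
    exact_mod_cast (by omega : y.length ≤ m + d)
  calc (n : ℕ∞) ≤ info U₀ (prefixOf x n) + (c : ℕ∞) := key n
    _ ≤ (info U (prefixOf x n) + (d : ℕ∞)) + (c : ℕ∞) := add_le_add_left hcomp _
    _ ≤ info U (prefixOf x n) + ((c + d + 1 : ℕ) : ℕ∞) := by
        rw [add_assoc]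
        apply add_le_add_right
        have h3 : ((c + d + 1 : ℕ) : ℕ∞) = (d : ℕ∞) + (c : ℕ∞) + 1 := by push_cast; ring
        rw [h3]
        exact le_self_add
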